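/- Let g = gl(m,ℂ), η = ε_1 − ε_m the highest root, and λ ∈ h* with (λ + ρ, η) = 1. Let I = {subsets J of {1,…,m} containing both 1 and m}. For J = {i_0 > i_1 > ⋯ > i_{s+1}} ∈ I, set f_J = e_{i_0,i_1} e_{i_1,i_2} ⋯ e_{i_s,i_{s+1}} ∈ U(n^−), set r(J) = {s − 1 : s ∈ complement of J in {1,…,m}}, and H_J = ∏_{i ∈ r(J)} ((λ+ρ, ε_1 − ε_{i+1}) − 1). Then in the Verma module M(λ) the vector Θ v_λ = Σ_{J ∈ I} f_J H_J v_λ is a highest weight vector of weight λ − η, i.e. e_{α_k} Θ v_λ = 0 for all k ∈ [m−1]. -/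

import Mathlib

attribute [local instance 100] LieRing.ofAssociativeRing

/-- For a strictly descending list `[i₀, i₁, …, i_{s+1}]` of indices, the action on a module
element of the product `f_I = e_{i₀,i₁} e_{i₁,i₂} ⋯ e_{i_s,i_{s+1}} ∈ U(n⁻)` of negative root
vectors of `gl(m)` (the leftmost factor acting last). -/
def act {m : ℕ} {M : Type*} [AddCommGroup M]
    [LieRingModule (Matrix (Fin m) (Fin m) ℂ) M] :
    List (Fin m) → M → M
  | [], x => x
  | [_], x => x
  | i :: j :: t, x => ⁅Matrix.single i j (1 : ℂ), act (j :: t) x⁆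

namespace Stmt6Aux

set_option linter.unusedSectionVars false

variable {m : ℕ} {M : Type*} [AddCommGroup M] [Module ℂ M]
  [LieRingModule (Matrix (Fin m) (Fin m) ℂ) M]
  [LieModule ℂ (Matrix (Fin m) (Fin m) ℂ) M]

local notation "E[" i "," j "]" => Matrix.single i j (1:ℂ)

lemma lie_EE (i j k l : Fin m) :
    ⁅E[i,j], E[k,l]⁆ =
      (if j = k then E[i,l] else 0) - (if l = i then E[k,j] else 0) := by
  rw [Ring.lie_def]
  by_cases h1 : j = k <;> by_cases h2 : l = i <;>
    simp [h1, h2, Matrix.single_mul_single_same, Matrix.single_mul_single_of_ne]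

lemma act_nil (x : M) : act ([] : List (Fin m)) x = x := rfl
lemma act_single (i : Fin m) (x : M) : act [i] x = x := rfl
lemma act_cons (i j : Fin m) (t : List (Fin m)) (x : M) :
    act (i :: j :: t) x = ⁅E[i,j], act (j :: t) x⁆ := rfl

lemma act_cons' (i : Fin m) {L : List (Fin m)} (hL : L ≠ []) (x : M) :
    act (i :: L) x = ⁅E[i, L.head hL], act L x⁆ := by
  cases L with
  | nil => exact absurd rfl hL
  | cons j t => rfl

lemma act_smul : ∀ (L : List (Fin m)) (c : ℂ) (x : M), act L (c • x) = c • act L x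
  | [], _, _ => rfl
  | [_], _, _ => rfl
  | i :: j :: t, c, x => by rw [act_cons, act_cons, act_smul (j :: t), lie_smul]

lemma act_neg : ∀ (L : List (Fin m)) (x : M), act L (-x) = - act L x
  | [], _ => rfl
  | [_], _ => rfl
  | i :: j :: t, x => by rw [act_cons, act_cons, act_neg (j :: t), lie_neg]

lemma act_append : ∀ (U : List (Fin m)) (h : Fin m) (R : List (Fin m)) (x : M),
    act (U ++ h :: R) x = act (U ++ [h]) (act (h :: R) x)
  | [], h, R, x => by simp [act_single]
  | [u], h, R, x => rfl
  | u :: u' :: U, h, R, x => by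
      have e1 : (u :: u' :: U) ++ h :: R = u :: u' :: (U ++ h :: R) := by simp
      have e2 : (u' :: U) ++ h :: R = u' :: (U ++ h :: R) := by simp
      have e3 : (u :: u' :: U) ++ [h] = u :: u' :: (U ++ [h]) := by simp
      have e4 : (u' :: U) ++ [h] = u' :: (U ++ [h]) := by simp
      have IH := act_append (u' :: U) h R x
      rw [e2, e4] at IH
      rw [e1, act_cons, IH, e3, act_cons]

variable {v : M} {lam : Fin m → ℂ}

/-- Z lemma: the raising operator kills `act L v` when `b` is never a source
index and `a` is never a target index along `L`. -/
lemma lie_act_eq_zero (hab : a < b) (hw0 : ⁅E[a,b], v⁆ = 0) :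
    ∀ L : List (Fin m), b ∉ L.dropLast → a ∉ L.tail → ⁅E[a,b], act L v⁆ = 0
  | [], _, _ => hw0
  | [x], _, _ => hw0
  | i :: j :: t, h1, h2 => by
    have hbi : ¬ (b = i) := fun h => h1 (by rw [h]; simp)
    have hja : ¬ (j = a) := fun h => h2 (by rw [← h]; simp)
    rw [act_cons, leibniz_lie, lie_EE, if_neg hbi, if_neg hja,
      sub_zero, zero_lie, zero_add,
      lie_act_eq_zero hab hw0 (j :: t)
        (fun hc => h1 (List.mem_cons_of_mem _ hc))
        (fun hc => h2 (List.mem_cons_of_mem _ hc)), lie_zero]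

/-- C1: a diagonal element acts by the weight on `act L v` if `c ∉ L`. -/
lemma lie_diag_act (hwt : ∀ i : Fin m, ⁅E[i,i], v⁆ = lam i • v) (c : Fin m) :
    ∀ L : List (Fin m), c ∉ L → ⁅E[c,c], act L v⁆ = lam c • act L v
  | [], _ => hwt c
  | [x], _ => hwt c
  | i :: j :: t, hc => by
    have hci : ¬ (c = i) := fun h => hc (by rw [h]; simp)
    have hjc : ¬ (j = c) := fun h => hc (by rw [← h]; simp)
    rw [act_cons, leibniz_lie, lie_EE, if_neg hci, if_neg hjc, sub_zero, zero_lie,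
      zero_add, lie_diag_act hwt c (j :: t) (fun h => hc (List.mem_cons_of_mem _ h)),
      lie_smul]

/-- C2: diagonal action when `c` is the head of the list. -/
lemma lie_diag_act_head (hwt : ∀ i : Fin m, ⁅E[i,i], v⁆ = lam i • v) (c : Fin m)
    (V : List (Fin m)) (hc : c ∉ V) :
    ⁅E[c,c], act (c :: V) v⁆ =
      (lam c + if V = [] then 0 else 1) • act (c :: V) v := by
  cases V with
  | nil => simpa [act_single] using hwt c
  | cons j t =>
    have hcj : ¬ (j = c) := fun h => hc (by rw [← h]; simp)
    rw [act_cons, leibniz_lie, lie_EE, if_pos rfl, if_neg hcj, sub_zero,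
      lie_diag_act hwt c (j :: t) hc, lie_smul,
      if_neg (show ¬ (j :: t = []) by simp)]
    module

variable {a b : Fin m}

lemma lie_act_both (hw0 : ⁅E[a,b], v⁆ = 0)
    (hwt : ∀ i : Fin m, ⁅E[i,i], v⁆ = lam i • v) (hab : (a:ℕ)+1 = (b:ℕ))
    (V : List (Fin m)) (hV : ∀ x ∈ V, x < a) :
    ⁅E[a,b], act (b :: a :: V) v⁆ =
      (lam a - lam b + if V = [] then 0 else 1) • act (a :: V) v := by
  have hab' : a < b := by rw [Fin.lt_def]; omega
  have haV : a ∉ V := fun h => lt_irrefl a (hV a h)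
  have hbV : b ∉ V := fun h => absurd (hab'.trans (hV b h)) (lt_irrefl a)
  have hd : b ∉ (a :: V).dropLast := by
    intro h
    rcases List.mem_cons.1 (List.mem_of_mem_dropLast h) with h | h
    · exact absurd (h ▸ hab') (lt_irrefl b)
    · exact hbV h
  have ht : a ∉ (a :: V).tail := haV
  rw [act_cons, leibniz_lie, lie_EE, if_pos rfl, if_pos rfl,
    lie_act_eq_zero hab' hw0 (a :: V) hd ht, lie_zero, add_zero, sub_lie,
    lie_diag_act_head hwt a V haV,
    lie_diag_act hwt b (a :: V) (by
      intro h
      rcases List.mem_cons.1 h with h | h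
      · exact absurd (h ▸ hab') (lt_irrefl b)
      · exact hbV h)]
  module

lemma lie_act_topb (hw0 : ⁅E[a,b], v⁆ = 0) (hab : (a:ℕ)+1 = (b:ℕ))
    (j : Fin m) (t : List (Fin m)) (hV : ∀ x ∈ j :: t, x < a) :
    ⁅E[a,b], act (b :: j :: t) v⁆ = act (a :: j :: t) v := by
  have hab' : a < b := by rw [Fin.lt_def]; omega
  have hja : ¬ (j = a) := fun h => absurd (h ▸ hV j (by simp)) (lt_irrefl a)
  have hd : b ∉ (j :: t).dropLast := by
    intro h
    exact absurd (hab'.trans (hV _ (List.mem_of_mem_dropLast h))) (lt_irrefl a)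
  have ht : a ∉ (j :: t).tail := by
    intro h
    exact absurd (hV a (List.mem_of_mem_tail h)) (lt_irrefl a)
  rw [act_cons, leibniz_lie, lie_EE, if_pos rfl, if_neg hja, sub_zero,
    lie_act_eq_zero hab' hw0 (j :: t) hd ht, lie_zero, add_zero, ← act_cons]

lemma lie_act_prefix (hab' : a < b) :
    ∀ (U : List (Fin m)) (h : Fin m), (∀ u ∈ U, b < u) → ¬ (h = a) → ∀ (x y : M),
      ⁅E[a,b], x⁆ = y → ⁅E[a,b], act (U ++ [h]) x⁆ = act (U ++ [h]) y
  | [], h, _, _, x, y, hxy => by simpa [act_single] using hxy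
  | [u], h, hU, hh, x, y, hxy => by
    have hbu : ¬ (b = u) := ne_of_lt (hU u (by simp))
    have e1 : ([u] : List (Fin m)) ++ [h] = [u, h] := rfl
    rw [e1, act_cons, leibniz_lie, lie_EE, if_neg hbu, if_neg hh, sub_zero,
      zero_lie, zero_add, act_single, hxy, act_cons, act_single]
  | u :: u' :: U, h, hU, hh, x, y, hxy => by
    have hbu : ¬ (b = u) := ne_of_lt (hU u (by simp))
    have hu'a : ¬ (u' = a) := by
      intro h'
      exact absurd (h' ▸ (hab'.trans (hU u' (by simp)))) (lt_irrefl a)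
    have IH := lie_act_prefix hab' (u' :: U) h (fun z hz => hU z (by simp [hz])) hh x y hxy
    simp only [List.cons_append] at IH ⊢
    rw [act_cons, leibniz_lie, lie_EE, if_neg hbu, if_neg hu'a, sub_zero,
      zero_lie, zero_add, IH, act_cons]

lemma lie_act_prefix_a (hab' : a < b) :
    ∀ (U : List (Fin m)), (∀ u ∈ U, b < u) → ∀ x : M, ⁅E[a,b], x⁆ = 0 → U ≠ [] →
      ⁅E[a,b], act (U ++ [a]) x⁆ = - act (U ++ [b]) x
  | [], _, _, _, hne => absurd rfl hne
  | [u], hU, x, hx, _ => by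
    have hbu : ¬ (b = u) := ne_of_lt (hU u (by simp))
    have e1 : ([u] : List (Fin m)) ++ [a] = [u, a] := rfl
    have e2 : ([u] : List (Fin m)) ++ [b] = [u, b] := rfl
    rw [e1, e2, act_cons, leibniz_lie, lie_EE, if_neg hbu, if_pos rfl,
      zero_sub, neg_lie, act_single, hx, lie_zero, add_zero, act_cons, act_single]
  | u :: u' :: U, hU, x, hx, _ => by
    have hbu : ¬ (b = u) := ne_of_lt (hU u (by simp))
    have hu'a : ¬ (u' = a) := by
      intro h'
      exact absurd (h' ▸ (hab'.trans (hU u' (by simp)))) (lt_irrefl a)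
    have IH := lie_act_prefix_a hab' (u' :: U) (fun z hz => hU z (by simp [hz])) x hx (by simp)
    simp only [List.cons_append] at IH ⊢
    rw [act_cons, leibniz_lie, lie_EE, if_neg hbu, if_neg hu'a, sub_zero,
      zero_lie, zero_add, IH, lie_neg, act_cons]

section Blemmas

variable (hw0 : ⁅E[a,b], v⁆ = 0) (hwt : ∀ i : Fin m, ⁅E[i,i], v⁆ = lam i • v)
  (hab : (a:ℕ)+1 = (b:ℕ)) {U V : List (Fin m)}
  (hU : ∀ u ∈ U, b < u) (hV : ∀ x ∈ V, x < a)

include hab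

lemma hab' : a < b := by rw [Fin.lt_def]; omega

include hw0 hV

lemma lie_act_aV : ⁅E[a,b], act (a :: V) v⁆ = 0 := by
  have h1 : a < b := hab' hab
  apply lie_act_eq_zero h1 hw0
  · intro h
    rcases List.mem_cons.1 (List.mem_of_mem_dropLast h) with h | h
    · exact absurd (h ▸ h1) (lt_irrefl b)
    · exact absurd (h1.trans (hV b h)) (lt_irrefl a)
  · exact fun h => absurd (hV a h) (lt_irrefl a)

include hwt hU

lemma B_ab : ⁅E[a,b], act (U ++ b :: a :: V) v⁆ =
    (lam a - lam b + if V = [] then 0 else 1) • act (U ++ [b]) (act (a :: V) v) := by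
  rw [act_append U b (a :: V),
    lie_act_prefix (hab' hab) U b hU (by intro h; rw [Fin.ext_iff] at h; omega) _ _
      (lie_act_both hw0 hwt hab V hV), act_smul]

end Blemmas

section Blemmas2

variable (hw0 : ⁅E[a,b], v⁆ = 0)
  (hab : (a:ℕ)+1 = (b:ℕ)) {U V : List (Fin m)}
  (hU : ∀ u ∈ U, b < u) (hV : ∀ x ∈ V, x < a)

include hw0 hab hU

lemma B_b (j : Fin m) (t : List (Fin m)) (hV' : ∀ x ∈ j :: t, x < a) :
    ⁅E[a,b], act (U ++ b :: j :: t) v⁆ = act (U ++ [b]) (act (a :: j :: t) v) := by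
  rw [act_append U b (j :: t),
    lie_act_prefix (hab' hab) U b hU (by intro h; rw [Fin.ext_iff] at h; omega) _ _
      (lie_act_topb hw0 hab j t hV')]

lemma B_b0 : ⁅E[a,b], act (U ++ [b]) v⁆ = 0 := by
  have h1 : a < b := hab' hab
  apply lie_act_eq_zero h1 hw0
  · rw [List.dropLast_concat]
    exact fun h => absurd (hU b h) (lt_irrefl b)
  · intro h
    rcases List.mem_append.1 (List.mem_of_mem_tail h) with h | h
    · exact absurd (h1.trans (hU a h)) (lt_irrefl a)
    · rw [List.mem_singleton] at h; rw [Fin.ext_iff] at h; omega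

include hV

lemma B_a (hUne : U ≠ []) : ⁅E[a,b], act (U ++ a :: V) v⁆ =
    - act (U ++ [b]) (act (a :: V) v) := by
  rw [act_append U a V,
    lie_act_prefix_a (hab' hab) U hU _ (lie_act_aV hw0 hab hV) hUne]

lemma B_none : ⁅E[a,b], act (U ++ V) v⁆ = 0 := by
  have h1 : a < b := hab' hab
  have hbm : ∀ z ∈ U ++ V, ¬ (z = b) ∧ ¬ (z = a) := by
    intro z hz
    rcases List.mem_append.1 hz with h | h
    · have hz2 := hU z h
      refine ⟨fun e => ?_, fun e => ?_⟩ <;> rw [e] at hz2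
      · exact absurd hz2 (lt_irrefl b)
      · exact absurd (h1.trans hz2) (lt_irrefl a)
    · have hz2 := hV z h
      refine ⟨fun e => ?_, fun e => ?_⟩ <;> rw [e] at hz2
      · exact absurd (h1.trans hz2) (lt_irrefl a)
      · exact absurd hz2 (lt_irrefl a)
  apply lie_act_eq_zero h1 hw0
  · intro h
    exact (hbm b (List.mem_of_mem_dropLast h)).1 rfl
  · intro h
    exact (hbm a (List.mem_of_mem_tail h)).2 rfl

end Blemmas2

lemma dsort_sorted (J : Finset (Fin m)) : ((J.sort (·≤·)).reverse).Pairwise (·>·) := by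
  rw [List.pairwise_reverse]
  exact List.sortedLT_iff_pairwise.1 J.sortedLT_sort

lemma dsort_eq {J : Finset (Fin m)} {L : List (Fin m)} (h1 : L.Pairwise (·>·))
    (h2 : ∀ x, x ∈ L ↔ x ∈ J) : (J.sort (·≤·)).reverse = L := by
  haveI : Std.Antisymm (α := Fin m) (·<·) := ⟨fun x y hx hy => absurd hy (not_lt.2 hx.le)⟩
  have hnd : L.Nodup := h1.imp (fun h => (ne_of_lt h).symm)
  have key : J.sort (·≤·) = L.reverse := by
    apply (fun hp hs => List.Perm.eq_of_pairwise' (r := (·<·))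
      (List.sortedLT_iff_pairwise.1 J.sortedLT_sort) hs hp) ?_ ?_
    · apply List.perm_of_nodup_nodup_toFinset_eq (J.sort_nodup _) (List.nodup_reverse.2 hnd)
      ext x
      simp only [List.mem_toFinset, Finset.mem_sort, List.mem_reverse]
      exact (h2 x).symm
    · rw [List.pairwise_reverse]
      exact h1
  rw [key, List.reverse_reverse]

lemma dsort_decomp {S J : Finset (Fin m)} (hab : (a:ℕ)+1 = (b:ℕ))
    (hS : ∀ s ∈ S, s < a ∨ b < s) (t : List (Fin m)) (ht1 : t.Pairwise (·>·))
    (ht2 : ∀ x ∈ t, x = a ∨ x = b)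
    (hJ : ∀ x, x ∈ J ↔ x ∈ S ∨ x ∈ t) :
    (J.sort (·≤·)).reverse =
      ((S.filter (fun s => b < s)).sort (·≤·)).reverse ++
      (t ++ ((S.filter (fun s => s < a)).sort (·≤·)).reverse) := by
  have memU : ∀ x, x ∈ ((S.filter (fun s => b < s)).sort (·≤·)).reverse ↔ x ∈ S ∧ b < x := by
    intro x; simp [List.mem_reverse, Finset.mem_sort, Finset.mem_filter]
  have memV : ∀ x, x ∈ ((S.filter (fun s => s < a)).sort (·≤·)).reverse ↔ x ∈ S ∧ x < a := by
    intro x; simp [List.mem_reverse, Finset.mem_sort, Finset.mem_filter]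
  apply dsort_eq
  · rw [List.pairwise_append]
    refine ⟨dsort_sorted _, ?_, ?_⟩
    · rw [List.pairwise_append]
      refine ⟨ht1, dsort_sorted _, ?_⟩
      intro x hx y hy
      have h1 := ht2 x hx
      obtain ⟨-, h2⟩ := (memV y).1 hy
      rw [Fin.lt_def] at h2
      rw [gt_iff_lt, Fin.lt_def]
      rcases h1 with h | h <;> rw [h] <;> omega
    · intro x hx y hy
      obtain ⟨-, h1⟩ := (memU x).1 hx
      rw [Fin.lt_def] at h1
      rw [List.mem_append] at hy
      rw [gt_iff_lt, Fin.lt_def]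
      rcases hy with hy | hy
      · rcases ht2 y hy with h | h <;> rw [h] <;> omega
      · obtain ⟨-, h2⟩ := (memV y).1 hy
        rw [Fin.lt_def] at h2; omega
  · intro x
    rw [List.mem_append, List.mem_append, memU, memV, hJ]
    constructor
    · rintro (⟨h, _⟩ | h | ⟨h, _⟩)
      · exact Or.inl h
      · exact Or.inr h
      · exact Or.inl h
    · rintro (h | h)
      · rcases hS x h with h' | h'
        · exact Or.inr (Or.inr ⟨h, h'⟩)
        · exact Or.inl ⟨h, h'⟩
      · exact Or.inr (Or.inl h)

lemma lie_sum {ι : Type*} (x : Matrix (Fin m) (Fin m) ℂ) (s : Finset ι) (f : ι → M) :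
    ⁅x, ∑ i ∈ s, f i⁆ = ∑ i ∈ s, ⁅x, f i⁆ :=
  map_sum (AddMonoidHom.mk' (fun y => ⁅x, y⁆) (lie_add x)) f s

set_option maxHeartbeats 1600000 in
lemma fiber_sum (hm : 2 ≤ m) (hw : ∀ i j : Fin m, i < j → ⁅E[i,j], v⁆ = 0)
    (hwt : ∀ i : Fin m, ⁅E[i,i], v⁆ = lam i • v)
    {z w a b : Fin m} (hz0 : (z:ℕ) = 0) (hwm : (w:ℕ) = m-1)
    (hlam : lam z - lam w + ((m:ℂ) - 1) = 1)
    (hab : (a:ℕ) + 1 = (b:ℕ))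
    (S : Finset (Fin m)) (haS : a ∉ S) (hbS : b ∉ S)
    (hzS : z ∈ S ∨ z = a) (hwS : w ∈ S ∨ w = b)
    (hSd : ∀ s ∈ S, s < a ∨ b < s) :
    ∑ J ∈ (Finset.univ.filter (fun J : Finset (Fin m) => z ∈ J ∧ w ∈ J)).filter
        (fun J => J \ {a, b} = S),
      (∏ s ∈ Finset.univ \ J, (lam z - lam s + ((s:ℕ):ℂ) - 1)) •
        ⁅E[a,b], act ((J.sort (·≤·)).reverse) v⁆ = 0 := by
  classical
  have hbtop : (b:ℕ) < m := b.isLt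
  have hab' : a < b := by rw [Fin.lt_def]; omega
  have hne : ¬ (a = b) := fun h => by rw [Fin.ext_iff] at h; omega
  have hw0 : ⁅E[a,b], v⁆ = 0 := hw a b hab'
  set U : List (Fin m) := ((S.filter (fun s => b < s)).sort (·≤·)).reverse with hUdef
  set V : List (Fin m) := ((S.filter (fun s => s < a)).sort (·≤·)).reverse with hVdef
  have hU : ∀ u ∈ U, b < u := by
    intro u hu
    rw [hUdef, List.mem_reverse, Finset.mem_sort, Finset.mem_filter] at hu
    exact hu.2
  have hV : ∀ x ∈ V, x < a := by
    intro x hx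
    rw [hVdef, List.mem_reverse, Finset.mem_sort, Finset.mem_filter] at hx
    exact hx.2
  have hzb : ¬ (z = b) := fun h => by rw [Fin.ext_iff] at h; omega
  have hwa : ¬ (w = a) := fun h => by rw [Fin.ext_iff] at h; omega
  -- decompositions
  have hd1 : ((insert b (insert a S)).sort (·≤·)).reverse = U ++ ([b, a] ++ V) := by
    apply dsort_decomp hab hSd
    · refine List.Pairwise.cons ?_ (List.pairwise_singleton _ _)
      intro y hy; rw [List.mem_singleton] at hy; rw [hy]; exact hab'
    · intro x hx; rcases List.mem_cons.1 hx with h | h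
      · exact Or.inr h
      · simp at h; exact Or.inl h
    · intro x; simp only [Finset.mem_insert, List.mem_cons,
        List.mem_singleton, List.not_mem_nil]; tauto
  have hd2 : ((insert b S).sort (·≤·)).reverse = U ++ ([b] ++ V) := by
    apply dsort_decomp hab hSd
    · exact List.pairwise_singleton _ _
    · intro x hx; rw [List.mem_singleton] at hx; exact Or.inr hx
    · intro x; simp only [Finset.mem_insert, List.mem_singleton]; tauto
  have hd3 : ((insert a S).sort (·≤·)).reverse = U ++ ([a] ++ V) := by
    apply dsort_decomp hab hSd
    · exact List.pairwise_singleton _ _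
    · intro x hx; rw [List.mem_singleton] at hx; exact Or.inl hx
    · intro x; simp only [Finset.mem_insert, List.mem_singleton]; tauto
  have hd4 : (S.sort (·≤·)).reverse = U ++ (([] : List (Fin m)) ++ V) := by
    apply dsort_decomp hab hSd
    · exact List.Pairwise.nil
    · intro x hx; exact absurd hx (List.not_mem_nil (a := x))
    · intro x; simp only [List.not_mem_nil]; tauto
  -- classification of the fiber
  have hclass : ∀ J : Finset (Fin m), J \ {a, b} = S →
      J = insert b (insert a S) ∨ J = insert b S ∨ J = insert a S ∨ J = S := by
    intro J hJS
    have h : ∀ x : Fin m, (x ∈ J ∧ ¬(x = a ∨ x = b)) ↔ x ∈ S := by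
      intro x
      have h := Finset.ext_iff.1 hJS x
      simpa only [Finset.mem_sdiff, Finset.mem_insert, Finset.mem_singleton] using h
    have hmS : ∀ x : Fin m, x ∈ J → ¬ x = a → ¬ x = b → x ∈ S :=
      fun x hx h1 h2 => (h x).1 ⟨hx, by tauto⟩
    have hSJ : ∀ x : Fin m, x ∈ S → x ∈ J := fun x hx => ((h x).2 hx).1
    by_cases haJ : a ∈ J <;> by_cases hbJ : b ∈ J
    · left; ext x
      simp only [Finset.mem_insert]
      constructor
      · intro hx
        by_cases h1 : x = b
        · exact Or.inl h1
        by_cases h2 : x = a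
        · exact Or.inr (Or.inl h2)
        · exact Or.inr (Or.inr (hmS x hx h2 h1))
      · rintro (rfl | rfl | hx)
        · exact hbJ
        · exact haJ
        · exact hSJ x hx
    · right; right; left; ext x
      simp only [Finset.mem_insert]
      constructor
      · intro hx
        by_cases h2 : x = a
        · exact Or.inl h2
        · exact Or.inr (hmS x hx h2 (fun e => hbJ (e ▸ hx)))
      · rintro (rfl | hx)
        · exact haJ
        · exact hSJ x hx
    · right; left; ext x
      simp only [Finset.mem_insert]
      constructor
      · intro hx
        by_cases h1 : x = b
        · exact Or.inl h1
        · exact Or.inr (hmS x hx (fun e => haJ (e ▸ hx)) h1)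
      · rintro (rfl | hx)
        · exact hbJ
        · exact hSJ x hx
    · right; right; right; ext x
      constructor
      · intro hx
        exact hmS x hx (fun e => haJ (e ▸ hx)) (fun e => hbJ (e ▸ hx))
      · exact hSJ x
  have hnotab : ∀ x : Fin m, x ∈ S → ¬(x = a ∨ x = b) := by
    rintro x hx (rfl | rfl)
    · exact haS hx
    · exact hbS hx
  have hback1 : (insert b (insert a S)) \ {a, b} = S := by
    ext x
    simp only [Finset.mem_sdiff, Finset.mem_insert, Finset.mem_singleton]
    constructor
    · rintro ⟨h1 | h1 | h1, h2⟩
      · exact absurd (Or.inr h1) h2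
      · exact absurd (Or.inl h1) h2
      · exact h1
    · exact fun hx => ⟨Or.inr (Or.inr hx), hnotab x hx⟩
  have hback2 : (insert b S) \ {a, b} = S := by
    ext x
    simp only [Finset.mem_sdiff, Finset.mem_insert, Finset.mem_singleton]
    constructor
    · rintro ⟨h1 | h1, h2⟩
      · exact absurd (Or.inr h1) h2
      · exact h1
    · exact fun hx => ⟨Or.inr hx, hnotab x hx⟩
  have hback3 : (insert a S) \ {a, b} = S := by
    ext x
    simp only [Finset.mem_sdiff, Finset.mem_insert, Finset.mem_singleton]
    constructor
    · rintro ⟨h1 | h1, h2⟩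
      · exact absurd (Or.inl h1) h2
      · exact h1
    · exact fun hx => ⟨Or.inr hx, hnotab x hx⟩
  have hback4 : S \ {a, b} = S := by
    ext x
    simp only [Finset.mem_sdiff, Finset.mem_insert, Finset.mem_singleton]
    exact ⟨fun h => h.1, fun hx => ⟨hx, hnotab x hx⟩⟩
  have hfib : (Finset.univ.filter (fun J : Finset (Fin m) => z ∈ J ∧ w ∈ J)).filter
        (fun J => J \ {a, b} = S) =
      (insert (insert b (insert a S)) (insert (insert b S) (insert (insert a S)
        ({S} : Finset (Finset (Fin m)))))).filter (fun J => z ∈ J ∧ w ∈ J) := by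
    ext J
    simp only [Finset.mem_filter, Finset.mem_univ, true_and, Finset.mem_insert,
      Finset.mem_singleton]
    constructor
    · rintro ⟨hJi, hJS⟩
      exact ⟨hclass J hJS, hJi⟩
    · rintro ⟨hJ4, hJi⟩
      refine ⟨hJi, ?_⟩
      rcases hJ4 with rfl | rfl | rfl | rfl
      exacts [hback1, hback2, hback3, hback4]
  -- distinctness of the four sets
  have e12 : insert b (insert a S) ≠ insert b S := by
    intro h
    have h' := (Finset.ext_iff.1 h a).1 (by simp)
    rcases Finset.mem_insert.1 h' with h' | h'
    exacts [hne h', haS h']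
  have e13 : insert b (insert a S) ≠ insert a S := by
    intro h
    have h' := (Finset.ext_iff.1 h b).1 (by simp)
    rcases Finset.mem_insert.1 h' with h' | h'
    exacts [hne h'.symm, hbS h']
  have e14 : insert b (insert a S) ≠ S := fun h =>
    hbS (h ▸ (Finset.mem_insert_self b _ : b ∈ insert b (insert a S)))
  have e23 : insert b S ≠ insert a S := by
    intro h
    have h' := (Finset.ext_iff.1 h b).1 (by simp)
    rcases Finset.mem_insert.1 h' with h' | h'
    exacts [hne h'.symm, hbS h']
  have e24 : insert b S ≠ S := fun h => hbS (h ▸ Finset.mem_insert_self b S)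
  have e34 : insert a S ≠ S := fun h => haS (h ▸ Finset.mem_insert_self a S)
  rw [hfib, Finset.sum_filter,
    Finset.sum_insert (by
      simp only [Finset.mem_insert, Finset.mem_singleton]
      push_neg
      exact ⟨e12, e13, e14⟩),
    Finset.sum_insert (by
      simp only [Finset.mem_insert, Finset.mem_singleton]
      push_neg
      exact ⟨e23, e24⟩),
    Finset.sum_insert (by
      simp only [Finset.mem_singleton]
      exact e34),
    Finset.sum_singleton]
  -- index membership of J1
  have hJ1idx : z ∈ insert b (insert a S) ∧ w ∈ insert b (insert a S) := by
    constructor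
    · rcases hzS with h | h
      · exact Finset.mem_insert_of_mem (Finset.mem_insert_of_mem h)
      · exact Finset.mem_insert_of_mem (h ▸ Finset.mem_insert_self a S)
    · rcases hwS with h | h
      · exact Finset.mem_insert_of_mem (Finset.mem_insert_of_mem h)
      · rw [h]; exact Finset.mem_insert_self b _
  -- coefficient identities
  have hC2 : Finset.univ \ insert b S =
      insert a (Finset.univ \ insert b (insert a S)) := by
    ext x
    simp only [Finset.mem_sdiff, Finset.mem_univ, true_and, Finset.mem_insert]
    by_cases hxa : x = a <;> simp [hxa] <;> tauto
  have hC3 : Finset.univ \ insert a S =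
      insert b (Finset.univ \ insert b (insert a S)) := by
    ext x
    simp only [Finset.mem_sdiff, Finset.mem_univ, true_and, Finset.mem_insert]
    by_cases hxb : x = b <;> simp [hxb] <;> tauto
  have hP2 : (∏ s ∈ Finset.univ \ insert b S, (lam z - lam s + ((s:ℕ):ℂ) - 1)) =
      (lam z - lam a + ((a:ℕ):ℂ) - 1) *
        ∏ s ∈ Finset.univ \ insert b (insert a S), (lam z - lam s + ((s:ℕ):ℂ) - 1) := by
    rw [hC2, Finset.prod_insert (by simp)]
  have hP3 : (∏ s ∈ Finset.univ \ insert a S, (lam z - lam s + ((s:ℕ):ℂ) - 1)) =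
      (lam z - lam b + ((b:ℕ):ℂ) - 1) *
        ∏ s ∈ Finset.univ \ insert b (insert a S), (lam z - lam s + ((s:ℕ):ℂ) - 1) := by
    rw [hC3, Finset.prod_insert (by simp)]
  -- bracket of the S-term is always zero
  have hbr4 : ⁅E[a,b], act ((S.sort (·≤·)).reverse) v⁆ = 0 := by
    rw [hd4, List.nil_append]
    exact B_none hw0 hab hU hV
  rw [hbr4, smul_zero, ite_self, add_zero]
  have hcast : ((b:ℕ):ℂ) = ((a:ℕ):ℂ) + 1 := by exact_mod_cast hab.symm
  by_cases haz : (a:ℕ) = 0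
  · -- V is empty
    have hVnil : V = [] := by
      rw [hVdef, List.reverse_eq_nil_iff,
        show Finset.filter (fun s => s < a) S = ∅ from Finset.filter_eq_empty_iff.2
          (fun {s} hs h => by rw [Fin.lt_def] at h; omega), Finset.sort_empty]
      
    have hza : z = a := Fin.ext (by omega)
    have hza' : lam z = lam a := congrArg lam hza
    have hbr1 : ⁅E[a,b], act (((insert b (insert a S)).sort (·≤·)).reverse) v⁆ =
        (lam a - lam b + 0) • act (U ++ [b]) (act (a :: V) v) := by
      rw [hd1, show U ++ ([b, a] ++ V) = U ++ b :: a :: V by simp,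
        B_ab hw0 hwt hab hU hV, if_pos hVnil]
    have hbr2 : ⁅E[a,b], act (((insert b S).sort (·≤·)).reverse) v⁆ = 0 := by
      rw [hd2, show U ++ ([b] ++ V) = U ++ [b] by rw [hVnil]; simp]
      exact B_b0 hw0 hab hU
    rw [hbr1, hbr2, smul_zero, ite_self, add_zero, if_pos hJ1idx]
    by_cases hbw : (b:ℕ) = m - 1
    · -- m = 2 case: only the first term
      have hwb : w = b := Fin.ext (by omega)
      have hwb' : lam w = lam b := congrArg lam hwb
      have hm2 : (m:ℂ) = 2 := by
        have : m = 2 := by omega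
        rw [this]; norm_num
      have hbr3 : ⁅E[a,b], act (((insert a S).sort (·≤·)).reverse) v⁆ = 0 := by
        have hU0 : U = [] := by
          rw [hUdef, List.reverse_eq_nil_iff,
            show Finset.filter (fun s => b < s) S = ∅ from Finset.filter_eq_empty_iff.2
              (fun {s} hs h => by have := s.isLt; rw [Fin.lt_def] at h; omega),
            Finset.sort_empty]
        rw [hd3, hU0, List.nil_append, List.singleton_append]
        exact lie_act_aV hw0 hab hV
      rw [hbr3, smul_zero, ite_self, add_zero]
      set P := ∏ s ∈ Finset.univ \ insert b (insert a S),
        (lam z - lam s + ((s:ℕ):ℂ) - 1) with hP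
      trans ((P * (lam a - lam b + 0)) • act (U ++ [b]) (act (a :: V) v))
      · module
      · have hsc : P * (lam a - lam b + 0) = 0 := by
          linear_combination (-P) * hza' + P * hlam + P * hwb' - P * hm2
        rw [hsc, zero_smul]
    · -- a = 0, b < m-1 : terms 1 and 3
      have hUne : U ≠ [] := by
        have hwS' : w ∈ S := by
          rcases hwS with h | h
          · exact h
          · exact absurd (congrArg Fin.val h) (by omega)
        have : w ∈ U := by
          rw [hUdef, List.mem_reverse, Finset.mem_sort, Finset.mem_filter]
          exact ⟨hwS', by rw [Fin.lt_def]; omega⟩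
        exact List.ne_nil_of_mem this
      have hJ3idx : z ∈ insert a S ∧ w ∈ insert a S := by
        constructor
        · exact hza ▸ Finset.mem_insert_self a S
        · rcases hwS with h | h
          · exact Finset.mem_insert_of_mem h
          · exact absurd (congrArg Fin.val h) (by omega)
      have hbr3 : ⁅E[a,b], act (((insert a S).sort (·≤·)).reverse) v⁆ =
          - act (U ++ [b]) (act (a :: V) v) := by
        rw [hd3, List.singleton_append]
        exact B_a hw0 hab hU hV hUne
      have hb1 : ((b:ℕ):ℂ) = 1 := by
        rw [show (b:ℕ) = 1 by omega]
        norm_num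
      rw [hbr3, hP3, if_pos hJ3idx]
      set P := ∏ s ∈ Finset.univ \ insert b (insert a S),
        (lam z - lam s + ((s:ℕ):ℂ) - 1) with hP
      trans ((P * (lam a - lam b + 0) -
        (lam z - lam b + ((b:ℕ):ℂ) - 1) * P) • act (U ++ [b]) (act (a :: V) v))
      · module
      · have hsc : P * (lam a - lam b + 0) -
            (lam z - lam b + ((b:ℕ):ℂ) - 1) * P = 0 := by
          linear_combination (-P) * hza' + (-P) * hb1
        rw [hsc, zero_smul]
  · -- a ≠ 0 : V is nonempty
    have hzS' : z ∈ S := by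
      rcases hzS with h | h
      · exact h
      · exact absurd (congrArg Fin.val h) (by omega)
    have hzV : z ∈ V := by
      rw [hVdef, List.mem_reverse, Finset.mem_sort, Finset.mem_filter]
      exact ⟨hzS', by rw [Fin.lt_def]; omega⟩
    have hVne : V ≠ [] := List.ne_nil_of_mem hzV
    obtain ⟨j, t, hVjt⟩ := List.exists_cons_of_ne_nil hVne
    have hbr1 : ⁅E[a,b], act (((insert b (insert a S)).sort (·≤·)).reverse) v⁆ =
        (lam a - lam b + 1) • act (U ++ [b]) (act (a :: V) v) := by
      rw [hd1, show U ++ ([b, a] ++ V) = U ++ b :: a :: V by simp,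
        B_ab hw0 hwt hab hU hV, if_neg hVne]
    have hbr2 : ⁅E[a,b], act (((insert b S).sort (·≤·)).reverse) v⁆ =
        act (U ++ [b]) (act (a :: V) v) := by
      rw [hd2, List.singleton_append, hVjt,
        B_b hw0 hab hU j t (by rw [← hVjt]; exact hV), ← hVjt]
    have hJ2idx : z ∈ insert b S ∧ w ∈ insert b S := by
      refine ⟨Finset.mem_insert_of_mem hzS', ?_⟩
      rcases hwS with h | h
      · exact Finset.mem_insert_of_mem h
      · rw [h]; exact Finset.mem_insert_self b S
    rw [hbr1, hbr2, if_pos hJ1idx, if_pos hJ2idx, hP2]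
    by_cases hbw : (b:ℕ) = m - 1
    · -- terms 1 and 2
      have hwb : w = b := Fin.ext (by omega)
      have hwb' : lam w = lam b := congrArg lam hwb
      have hacast : ((a:ℕ):ℂ) = (m:ℂ) - 2 := by
        have h1 : (a:ℕ) + 2 = m := by omega
        have h2 : ((((a:ℕ) + 2 : ℕ)):ℂ) = (m:ℂ) := by rw [h1]
        push_cast at h2
        linear_combination h2
      have hbr3 : ⁅E[a,b], act (((insert a S).sort (·≤·)).reverse) v⁆ = 0 := by
        have hU0 : U = [] := by
          rw [hUdef, List.reverse_eq_nil_iff,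
            show Finset.filter (fun s => b < s) S = ∅ from Finset.filter_eq_empty_iff.2
              (fun {s} hs h => by have := s.isLt; rw [Fin.lt_def] at h; omega),
            Finset.sort_empty]
        rw [hd3, hU0, List.nil_append, List.singleton_append]
        exact lie_act_aV hw0 hab hV
      rw [hbr3, smul_zero, ite_self, add_zero]
      set P := ∏ s ∈ Finset.univ \ insert b (insert a S),
        (lam z - lam s + ((s:ℕ):ℂ) - 1) with hP
      trans ((P * (lam a - lam b + 1) +
        (lam z - lam a + ((a:ℕ):ℂ) - 1) * P) • act (U ++ [b]) (act (a :: V) v))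
      · module
      · have hsc : P * (lam a - lam b + 1) +
            (lam z - lam a + ((a:ℕ):ℂ) - 1) * P = 0 := by
          linear_combination P * hlam + P * hwb' + P * hacast
        rw [hsc, zero_smul]
    · -- generic case: terms 1, 2, 3
      have hUne : U ≠ [] := by
        have hwS' : w ∈ S := by
          rcases hwS with h | h
          · exact h
          · exact absurd (congrArg Fin.val h) (by omega)
        have : w ∈ U := by
          rw [hUdef, List.mem_reverse, Finset.mem_sort, Finset.mem_filter]
          exact ⟨hwS', by rw [Fin.lt_def]; omega⟩
        exact List.ne_nil_of_mem this
      have hJ3idx : z ∈ insert a S ∧ w ∈ insert a S := by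
        refine ⟨Finset.mem_insert_of_mem hzS', ?_⟩
        rcases hwS with h | h
        · exact Finset.mem_insert_of_mem h
        · exact absurd (congrArg Fin.val h) (by omega)
      have hbr3 : ⁅E[a,b], act (((insert a S).sort (·≤·)).reverse) v⁆ =
          - act (U ++ [b]) (act (a :: V) v) := by
        rw [hd3, List.singleton_append]
        exact B_a hw0 hab hU hV hUne
      rw [hbr3, hP3, if_pos hJ3idx]
      set P := ∏ s ∈ Finset.univ \ insert b (insert a S),
        (lam z - lam s + ((s:ℕ):ℂ) - 1) with hP
      trans ((P * (lam a - lam b + 1) + (lam z - lam a + ((a:ℕ):ℂ) - 1) * P -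
        (lam z - lam b + ((b:ℕ):ℂ) - 1) * P) • act (U ++ [b]) (act (a :: V) v))
      · module
      · have hsc : P * (lam a - lam b + 1) + (lam z - lam a + ((a:ℕ):ℂ) - 1) * P -
            (lam z - lam b + ((b:ℕ):ℂ) - 1) * P = 0 := by
          linear_combination (-P) * hcast
        rw [hsc, zero_smul]

end Stmt6Aux

set_option maxHeartbeats 1600000

/-- Šapovalov element of `gl(m)` for the highest root `η = ε_1 − ε_m` (Theorem `bb`):
if `v` is a highest weight vector of weight `λ` with `(λ + ρ, η) = 1`, i.e.
`λ_1 − λ_m + (m − 1) = 1`, then `Θ v = Σ_{J ∈ 𝓘} H_J(λ) · f_J v` is a highest weight vector,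
where `𝓘` is the set of subsets of `{1,…,m}` containing `1` and `m`,
`f_J` is the descending product of root vectors along `J`, and
`H_J(λ) = ∏_{s ∉ J} ((λ+ρ, ε_1 − ε_{s}) − 1)` (0-based: factor `λ_0 − λ_s + s − 1`). -/
theorem stmt6 {m : ℕ} (hm : 2 ≤ m) {M : Type*} [AddCommGroup M] [Module ℂ M]
    [LieRingModule (Matrix (Fin m) (Fin m) ℂ) M]
    [LieModule ℂ (Matrix (Fin m) (Fin m) ℂ) M]
    (v : M) (lam : Fin m → ℂ)
    (hw : ∀ i j : Fin m, i < j → ⁅Matrix.single i j (1 : ℂ), v⁆ = 0)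
    (hwt : ∀ i : Fin m, ⁅Matrix.single i i (1 : ℂ), v⁆ = lam i • v)
    (hlam : lam ⟨0, by omega⟩ - lam ⟨m - 1, by omega⟩ + ((m : ℂ) - 1) = 1)
    (Θv : M)
    (hΘ : Θv = ∑ J ∈ Finset.univ.filter
        (fun J : Finset (Fin m) => (⟨0, by omega⟩ : Fin m) ∈ J ∧ (⟨m - 1, by omega⟩ : Fin m) ∈ J),
      (∏ s ∈ Finset.univ \ J,
          (lam ⟨0, by omega⟩ - lam s + ((s : ℕ) : ℂ) - 1)) •
        act ((J.sort (· ≤ ·)).reverse) v) :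
    ∀ k : ℕ, 1 ≤ k → ∀ hk : k ≤ m - 1,
      ⁅Matrix.single (⟨k - 1, by omega⟩ : Fin m) (⟨k, by omega⟩ : Fin m) (1 : ℂ),
        Θv⁆ = 0 := by
  classical
  intro k hk1 hk
  rw [hΘ, Stmt6Aux.lie_sum]
  simp_rw [lie_smul]
  set z : Fin m := ⟨0, by omega⟩ with hz
  set w : Fin m := ⟨m - 1, by omega⟩ with hwdef
  set a : Fin m := ⟨k - 1, by omega⟩ with hadef
  set b : Fin m := ⟨k, by omega⟩ with hbdef
  have hab : (a:ℕ) + 1 = (b:ℕ) := by simp [hadef, hbdef]; omega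
  rw [← Finset.sum_fiberwise_of_maps_to
    (t := (Finset.univ.filter (fun J : Finset (Fin m) => z ∈ J ∧ w ∈ J)).image
      (fun J => J \ {a, b}))
    (g := fun J => J \ {a, b})
    (fun J hJ => Finset.mem_image_of_mem _ hJ)]
  apply Finset.sum_eq_zero
  intro S hS
  obtain ⟨J₀, hJ₀mem, hJ₀⟩ := Finset.mem_image.1 hS
  have hzJ₀ : z ∈ J₀ := (Finset.mem_filter.1 hJ₀mem).2.1
  have hwJ₀ : w ∈ J₀ := (Finset.mem_filter.1 hJ₀mem).2.2
  subst hJ₀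
  have haS : a ∉ J₀ \ {a, b} := by simp
  have hbS : b ∉ J₀ \ {a, b} := by simp
  have hzb : ¬ (z = b) := by
    intro h
    have := congrArg Fin.val h
    simp [hz, hbdef] at this
    omega
  have hwa : ¬ (w = a) := by
    intro h
    have := congrArg Fin.val h
    simp [hwdef, hadef] at this
    omega
  have hzS : z ∈ J₀ \ {a, b} ∨ z = a := by
    by_cases h : z = a
    · exact Or.inr h
    · left
      simp only [Finset.mem_sdiff, Finset.mem_insert, Finset.mem_singleton]
      exact ⟨hzJ₀, by tauto⟩
  have hwS : w ∈ J₀ \ {a, b} ∨ w = b := by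
    by_cases h : w = b
    · exact Or.inr h
    · left
      simp only [Finset.mem_sdiff, Finset.mem_insert, Finset.mem_singleton]
      exact ⟨hwJ₀, by tauto⟩
  have hSd : ∀ s ∈ J₀ \ {a, b}, s < a ∨ b < s := by
    intro s hs
    simp only [Finset.mem_sdiff, Finset.mem_insert, Finset.mem_singleton] at hs
    have h1 : ¬ (s = a) := fun h => hs.2 (Or.inl h)
    have h2 : ¬ (s = b) := fun h => hs.2 (Or.inr h)
    rw [Fin.ext_iff] at h1 h2
    rw [Fin.lt_def, Fin.lt_def]
    simp only [hadef, hbdef] at h1 h2 ⊢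
    omega
  exact Stmt6Aux.fiber_sum hm hw hwt (by simp [hz]) (by simp [hwdef])
    hlam hab _ haS hbS hzS hwS hSd
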